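/- Let k ≥ 2 and let K ⊆ ℓ²(F_n^+)^{⊗k} be the closed span of basis vectors ξ_{u_1} ⊗ ⋯ ⊗ ξ_{u_k} such that the words u_1,...,u_k have no common nonempty prefix. Then K is a wandering subspace for the tuple (L_1^{⊗k},...,L_n^{⊗k}): the subspaces {L_w^{⊗k} K : w ∈ F_n^+} are pairwise orthogonal. -/

import Mathlib

private lemma freeMonoid_prefix_aux {α : Type*} {k : ℕ} (t : FreeMonoid α) (ht : t ≠ 1)
    (u u' : Fin k → FreeMonoid α) (h : ∀ j, u' j = t * u j) :
    ∃ i : α, ∀ j, ∃ v, u' j = FreeMonoid.of i * v := by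
  obtain ⟨i, rest, hcons⟩ : ∃ i rest, FreeMonoid.toList t = i :: rest := by
    cases h' : FreeMonoid.toList t with
    | nil =>
      exact absurd (FreeMonoid.toList.injective (by simpa using h')) ht
    | cons a l => exact ⟨a, l, rfl⟩
  have ht' : t = FreeMonoid.of i * FreeMonoid.ofList rest :=
    FreeMonoid.toList.injective (by
      simp [FreeMonoid.toList_mul, FreeMonoid.toList_of, FreeMonoid.toList_ofList, hcons])
  exact ⟨i, fun j => ⟨FreeMonoid.ofList rest * u j, by rw [h j, ht', mul_assoc]⟩⟩

/-- Let `k ≥ 2` and let `K ⊆ ℓ²(F_n^+)^{⊗k}` be the closed span of the basis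
vectors `ξ_{u₁} ⊗ ⋯ ⊗ ξ_{u_k}` such that the words `u₁, …, u_k` have no common nonempty
prefix. Then `K` is wandering for the tuple `(L₁^{⊗k}, …, L_n^{⊗k})`: the subspaces
`L_w^{⊗k} K`, `w ∈ F_n^+`, are pairwise orthogonal. The `k`-fold tensor power is modelled
by a Hilbert space with orthonormal (Hilbert) basis `E u` indexed by
`u : Fin k → F_n^+`, with `L_w^{⊗k} (E u) = E (fun j => w * u j)`. -/
theorem stmt_5 (n k : ℕ) (hk : 2 ≤ k) (Hk : Type*) [NormedAddCommGroup Hk]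
    [InnerProductSpace ℂ Hk] [CompleteSpace Hk]
    (E : HilbertBasis (Fin k → FreeMonoid (Fin n)) ℂ Hk)
    (Lk : FreeMonoid (Fin n) → Hk →L[ℂ] Hk)
    (hLk : ∀ w u, Lk w (E u) = E (fun j => w * u j)) :
    ∀ w w' : FreeMonoid (Fin n), w ≠ w' →
      ∀ x ∈ (Submodule.span ℂ
          (⇑E '' {u | ¬ ∃ i : Fin n, ∀ j, ∃ v, u j = FreeMonoid.of i * v})).topologicalClosure,
      ∀ y ∈ (Submodule.span ℂ
          (⇑E '' {u | ¬ ∃ i : Fin n, ∀ j, ∃ v, u j = FreeMonoid.of i * v})).topologicalClosure,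
        (inner ℂ (Lk w x) (Lk w' y) : ℂ) = 0 := by
  intro w w' hww' x hx y hy
  set S : Set (Fin k → FreeMonoid (Fin n)) :=
    {u | ¬ ∃ i : Fin n, ∀ j, ∃ v, u j = FreeMonoid.of i * v} with hS
  -- Orthogonality at the level of basis vectors
  have key : ∀ u ∈ S, ∀ u' ∈ S,
      (inner ℂ (Lk w (E u)) (Lk w' (E u')) : ℂ) = 0 := by
    intro u hu u' hu'
    rw [hLk, hLk]
    have hne : (fun j => w * u j) ≠ (fun j => w' * u' j) := by
      intro h
      have hj : ∀ j, w * u j = w' * u' j := fun j => congrFun h j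
      have j0 : Fin k := ⟨0, by omega⟩
      have hj0 : FreeMonoid.toList w ++ FreeMonoid.toList (u j0)
          = FreeMonoid.toList w' ++ FreeMonoid.toList (u' j0) := by
        have := congrArg FreeMonoid.toList (hj j0)
        simpa [FreeMonoid.toList_mul] using this
      rcases List.append_eq_append_iff.mp hj0 with ⟨t, hwt, _⟩ | ⟨t, hwt, _⟩
      · -- w' = w * t with t ≠ 1, hence u j = t * u' j for all j
        have hwt' : w' = w * FreeMonoid.ofList t :=
          FreeMonoid.toList.injective (by
            simpa [FreeMonoid.toList_mul, FreeMonoid.toList_ofList] using hwt)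
        have htne : FreeMonoid.ofList t ≠ 1 := by
          intro h1
          apply hww'
          rw [hwt', h1, mul_one]
        have huj : ∀ j, u j = FreeMonoid.ofList t * u' j := by
          intro j
          have := hj j
          rw [hwt', mul_assoc] at this
          exact mul_left_cancel this
        exact hu (freeMonoid_prefix_aux _ htne _ _ huj)
      · -- w = w' * t with t ≠ 1, hence u' j = t * u j for all j
        have hwt' : w = w' * FreeMonoid.ofList t :=
          FreeMonoid.toList.injective (by
            simpa [FreeMonoid.toList_mul, FreeMonoid.toList_ofList] using hwt)
        have htne : FreeMonoid.ofList t ≠ 1 := by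
          intro h1
          apply hww'
          rw [hwt', h1, mul_one]
        have huj : ∀ j, u' j = FreeMonoid.ofList t * u j := by
          intro j
          have := (hj j).symm
          rw [hwt', mul_assoc] at this
          exact mul_left_cancel this
        exact hu' (freeMonoid_prefix_aux _ htne _ _ huj)
    exact E.orthonormal.2 hne
  -- Extend to the closure in the second variable
  have step1 : ∀ u ∈ S, (inner ℂ (Lk w (E u)) (Lk w' y) : ℂ) = 0 := by
    intro u hu
    set f : Hk →L[ℂ] ℂ := (innerSL ℂ (Lk w (E u))).comp (Lk w') with hf
    have hker : Submodule.span ℂ (⇑E '' S) ≤ f.ker := by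
      rw [Submodule.span_le]
      rintro _ ⟨u', hu', rfl⟩
      simpa [f] using key u hu u' hu'
    have hcl := Submodule.topologicalClosure_minimal _ hker (ContinuousLinearMap.isClosed_ker f)
    exact hcl hy
  -- Extend to the closure in the first variable
  have step2 : (inner ℂ (Lk w' y) (Lk w x) : ℂ) = 0 := by
    set g : Hk →L[ℂ] ℂ := (innerSL ℂ (Lk w' y)).comp (Lk w) with hg
    have hker : Submodule.span ℂ (⇑E '' S) ≤ g.ker := by
      rw [Submodule.span_le]
      rintro _ ⟨u, hu, rfl⟩
      have := step1 u hu
      simpa [g, inner_eq_zero_symm] using this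
    have hcl := Submodule.topologicalClosure_minimal _ hker (ContinuousLinearMap.isClosed_ker g)
    exact hcl hx
  exact inner_eq_zero_symm.mp step2
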